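/- Fix integers K ≥ 1 and 1 ≤ i ≤ K, a real δ ∈ [0,1) and a real N > 0. Define β_j = 1 − δ^{K−j+1} for i ≤ j ≤ K and α_{l→j} = δ^{K−j+1}(1−δ)^{j−l} for l < j, and define the GGT subphase lengths recursively by t_i = N/β_i and t_j = (1/β_j) Σ_{l=i}^{j−1} C(j−1, l−1) t_l α_{l→j} for i < j ≤ K. Then for every j with i ≤ j ≤ K: Σ_{l=i}^{j} C(j−1, l−1) t_l = N · C(j−1, j−i) / β_j, where C(·,·) denotes the binomial coefficient. -/

import Mathlib

open Finset

/-- Trinomial revision + binomial theorem: the inner sum collapses. -/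
lemma ggt_aux_inner (x : ℝ) (m j : ℕ) (hm : 1 ≤ m) (hmj : m ≤ j) :
    ∑ l ∈ Finset.Icc m j,
        ((Nat.choose (j-1) (l-1) : ℝ) * (Nat.choose (l-1) (m-1) : ℝ) * (-1)^(l-m) * x^(j-l))
      = (Nat.choose (j-1) (m-1) : ℝ) * (x-1)^(j-m) := by
  rw [← Finset.Ico_add_one_right_eq_Icc, Finset.sum_Ico_eq_sum_range]
  have hn : j + 1 - m = (j - m) + 1 := by omega
  rw [hn]
  have key : ∀ r ∈ Finset.range (j - m + 1),
      ((Nat.choose (j-1) (m+r-1) : ℝ) * (Nat.choose (m+r-1) (m-1) : ℝ) * (-1)^(m+r-m) * x^(j-(m+r)))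
        = (Nat.choose (j-1) (m-1) : ℝ)
            * ((-1)^r * x^((j-m)-r) * (Nat.choose (j-m) r : ℝ)) := by
    intro r hr
    simp only [Finset.mem_range] at hr
    have h2 : m + r - m = r := by omega
    have h3 : j - (m+r) = (j-m) - r := by omega
    have h4 : Nat.choose (j-1) (m+r-1) * Nat.choose (m+r-1) (m-1)
        = Nat.choose (j-1) (m-1) * Nat.choose (j-m) r := by
      have e1 : (j-1) - (m-1) = j - m := by omega
      have e2 : (m+r-1) - (m-1) = r := by omega
      rw [Nat.choose_mul (by omega), e1, e2]
    have h4' : (Nat.choose (j-1) (m+r-1) : ℝ) * (Nat.choose (m+r-1) (m-1) : ℝ)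
        = (Nat.choose (j-1) (m-1) : ℝ) * (Nat.choose (j-m) r : ℝ) := by
      exact_mod_cast congrArg (Nat.cast : ℕ → ℝ) h4
    rw [h2, h3]
    calc (Nat.choose (j-1) (m+r-1) : ℝ) * (Nat.choose (m+r-1) (m-1) : ℝ) * (-1)^r * x^((j-m)-r)
        = ((Nat.choose (j-1) (m+r-1) : ℝ) * (Nat.choose (m+r-1) (m-1) : ℝ)) * ((-1)^r * x^((j-m)-r)) := by ring
      _ = ((Nat.choose (j-1) (m-1) : ℝ) * (Nat.choose (j-m) r : ℝ)) * ((-1)^r * x^((j-m)-r)) := by rw [h4']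
      _ = (Nat.choose (j-1) (m-1) : ℝ) * ((-1)^r * x^((j-m)-r) * (Nat.choose (j-m) r : ℝ)) := by ring
  rw [Finset.sum_congr rfl key, ← Finset.mul_sum]
  congr 1
  have := add_pow (-1 : ℝ) x (j - m)
  rw [show (-1 : ℝ) + x = x - 1 by ring] at this
  rw [← this]

/-- Weighted double-sum collapse. -/
lemma ggt_T (i : ℕ) (N x : ℝ) (j : ℕ) (hi : 1 ≤ i) (hij : i ≤ j) (c : ℕ → ℝ) :
    ∑ l ∈ Finset.Icc i j, (Nat.choose (j-1) (l-1) : ℝ) * x^(j-l)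
        * (N * ∑ m ∈ Finset.Icc i l, (-1 : ℝ)^(l-m) * (Nat.choose (l-1) (m-1) : ℝ) * c m)
      = N * ∑ m ∈ Finset.Icc i j, (Nat.choose (j-1) (m-1) : ℝ) * (x-1)^(j-m) * c m := by
  have step1 : ∀ l ∈ Finset.Icc i j,
      (Nat.choose (j-1) (l-1) : ℝ) * x^(j-l)
          * (N * ∑ m ∈ Finset.Icc i l, (-1 : ℝ)^(l-m) * (Nat.choose (l-1) (m-1) : ℝ) * c m)
        = ∑ m ∈ Finset.Icc i l,
            N * c m * ((Nat.choose (j-1) (l-1) : ℝ) * (Nat.choose (l-1) (m-1) : ℝ)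
              * (-1 : ℝ)^(l-m) * x^(j-l)) := by
    intro l _
    rw [Finset.mul_sum, Finset.mul_sum]
    exact Finset.sum_congr rfl (fun m _ => by ring)
  rw [Finset.sum_congr rfl step1]
  rw [Finset.sum_comm' (t' := Finset.Icc i j) (s' := fun m => Finset.Icc m j)
    (by intro l m; simp only [Finset.mem_Icc]; omega)]
  rw [Finset.mul_sum]
  refine Finset.sum_congr rfl (fun m hm => ?_)
  simp only [Finset.mem_Icc] at hm
  rw [← Finset.mul_sum, ggt_aux_inner x m j (le_trans hi hm.1) hm.2]
  ring

/-- Alternating vanishing identity. -/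
lemma ggt_alt (i j : ℕ) (hi : 1 ≤ i) (hij : i < j) :
    ∑ m ∈ Finset.Icc i j,
        (-1 : ℝ)^(j-m) * (Nat.choose (j-1) (m-1) : ℝ) * (Nat.choose (m-1) (i-1) : ℝ) = 0 := by
  have h := ggt_aux_inner (1 : ℝ) i j hi (le_of_lt hij)
  rw [show (1 : ℝ) - 1 = 0 by ring, zero_pow (by omega : j - i ≠ 0), mul_zero] at h
  have flip : ∀ m ∈ Finset.Icc i j,
      (-1 : ℝ)^(j-m) * (Nat.choose (j-1) (m-1) : ℝ) * (Nat.choose (m-1) (i-1) : ℝ)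
        = (-1 : ℝ)^(j-i) * ((Nat.choose (j-1) (m-1) : ℝ) * (Nat.choose (m-1) (i-1) : ℝ)
            * (-1 : ℝ)^(m-i) * (1 : ℝ)^(j-m)) := by
    intro m hm
    simp only [Finset.mem_Icc] at hm
    have : (-1 : ℝ)^(j-i) = (-1 : ℝ)^(j-m) * (-1 : ℝ)^(m-i) := by
      rw [← pow_add]; congr 1; omega
    rw [this, one_pow]
    have hsq : (-1 : ℝ)^(m-i) * (-1 : ℝ)^(m-i) = 1 := by
      rw [← pow_add]; exact Even.neg_one_pow ⟨m-i, rfl⟩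
    linear_combination (-(Nat.choose (j-1) (m-1) : ℝ) * (Nat.choose (m-1) (i-1) : ℝ)
      * (-1 : ℝ)^(j-m)) * hsq
  rw [Finset.sum_congr rfl flip, ← Finset.mul_sum, h, mul_zero]

noncomputable def ggtC (K i : ℕ) (δ : ℝ) (m : ℕ) : ℝ :=
  (Nat.choose (m-1) (i-1) : ℝ) / (1 - δ^(K-m+1))

noncomputable def ggtS (K i : ℕ) (δ N : ℝ) (l : ℕ) : ℝ :=
  N * ∑ m ∈ Finset.Icc i l, (-1 : ℝ)^(l-m) * (Nat.choose (l-1) (m-1) : ℝ) * ggtC K i δ m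

lemma ggtS_weighted (K i : ℕ) (δ N x : ℝ) (j : ℕ) (hi : 1 ≤ i) (hij : i ≤ j) :
    ∑ l ∈ Finset.Icc i j, (Nat.choose (j-1) (l-1) : ℝ) * x^(j-l) * ggtS K i δ N l
      = N * ∑ m ∈ Finset.Icc i j,
          (Nat.choose (j-1) (m-1) : ℝ) * (x-1)^(j-m) * ggtC K i δ m := by
  simpa only [ggtS] using ggt_T i N x j hi hij (ggtC K i δ)

lemma ggt_beta_pos {δ : ℝ} (hδ0 : 0 ≤ δ) (hδ1 : δ < 1) (K m : ℕ) :
    0 < 1 - δ^(K-m+1) := by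
  have : δ^(K-m+1) < 1 := pow_lt_one₀ hδ0 hδ1 (by omega)
  linarith

lemma ggtS_key (K i : ℕ) (δ N : ℝ) (hδ0 : 0 ≤ δ) (hδ1 : δ < 1)
    (j : ℕ) (hi : 1 ≤ i) (hij : i < j) (hjK : j ≤ K) :
    ggtS K i δ N j
      = δ^(K-j+1) * ∑ l ∈ Finset.Icc i j,
          (Nat.choose (j-1) (l-1) : ℝ) * (1-δ)^(j-l) * ggtS K i δ N l := by
  rw [ggtS_weighted K i δ N (1-δ) j hi hij.le, ggtS, Finset.mul_sum, Finset.mul_sum,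
    Finset.mul_sum, ← sub_eq_zero, ← Finset.sum_sub_distrib]
  have hterm : ∀ m ∈ Finset.Icc i j,
      N * ((-1 : ℝ)^(j-m) * (Nat.choose (j-1) (m-1) : ℝ) * ggtC K i δ m)
        - δ^(K-j+1) * (N * ((Nat.choose (j-1) (m-1) : ℝ) * (1-δ-1)^(j-m) * ggtC K i δ m))
      = N * ((-1 : ℝ)^(j-m) * (Nat.choose (j-1) (m-1) : ℝ) * (Nat.choose (m-1) (i-1) : ℝ)) := by
    intro m hm
    simp only [Finset.mem_Icc] at hm
    have e1 : ((1 : ℝ) - δ - 1)^(j-m) = (-1 : ℝ)^(j-m) * δ^(j-m) := by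
      rw [show (1 : ℝ) - δ - 1 = -δ by ring, neg_pow]
    have e2 : δ^(K-j+1) * δ^(j-m) = δ^(K-m+1) := by
      rw [← pow_add]; congr 1; omega
    have e3 : ggtC K i δ m * (1 - δ^(K-m+1)) = (Nat.choose (m-1) (i-1) : ℝ) :=
      div_mul_cancel₀ _ (ne_of_gt (ggt_beta_pos hδ0 hδ1 K m))
    rw [e1]
    linear_combination (N * (-1 : ℝ)^(j-m) * (Nat.choose (j-1) (m-1) : ℝ)) * e3
      - (N * (-1 : ℝ)^(j-m) * (Nat.choose (j-1) (m-1) : ℝ) * ggtC K i δ m) * e2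
  rw [Finset.sum_congr rfl hterm, ← Finset.mul_sum, ggt_alt i j hi hij, mul_zero]

lemma ggtS_base (K i : ℕ) (δ N : ℝ) :
    ggtS K i δ N i = N / (1 - δ^(K-i+1)) := by
  rw [ggtS, Finset.Icc_self, Finset.sum_singleton, ggtC, Nat.sub_self, pow_zero,
    Nat.choose_self, Nat.cast_one, one_mul, one_mul, mul_one_div]

/-- Closed form `U_j^i = N C(j-1, j-i)/β_j` for the grouped GGT
subphase lengths: with `β_j = 1 - δ^(K-j+1)`, `α_{l→j} = δ^(K-j+1)(1-δ)^(j-l)`,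
`t_i = N/β_i` and `t_j = (1/β_j) Σ_{l=i}^{j-1} C(j-1,l-1) t_l α_{l→j}` for
`i < j ≤ K`, one has `Σ_{l=i}^j C(j-1,l-1) t_l = N C(j-1, j-i)/β_j` for all
`i ≤ j ≤ K`. -/
theorem ggt_grouped_closed_form (K i : ℕ) (hi : 1 ≤ i) (hiK : i ≤ K)
    (δ N : ℝ) (hδ0 : 0 ≤ δ) (hδ1 : δ < 1) (hN : 0 < N)
    (β : ℕ → ℝ) (hβ : ∀ j, i ≤ j → j ≤ K → β j = 1 - δ ^ (K - j + 1))
    (α : ℕ → ℕ → ℝ) (hα : ∀ l j, l < j → α l j = δ ^ (K - j + 1) * (1 - δ) ^ (j - l))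
    (t : ℕ → ℝ) (hti : t i = N / β i)
    (htj : ∀ j, i < j → j ≤ K →
      t j = (1 / β j) * ∑ l ∈ Finset.Icc i (j - 1), (Nat.choose (j - 1) (l - 1) : ℝ) * t l * α l j) :
    ∀ j, i ≤ j → j ≤ K →
      ∑ l ∈ Finset.Icc i j, (Nat.choose (j - 1) (l - 1) : ℝ) * t l
        = N * (Nat.choose (j - 1) (j - i) : ℝ) / β j := by
  have hb : ∀ m : ℕ, 0 < 1 - δ^(K-m+1) := fun m => ggt_beta_pos hδ0 hδ1 K m
  have ht : ∀ j, i ≤ j → j ≤ K → t j = ggtS K i δ N j := by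
    intro j
    induction j using Nat.strong_induction_on with
    | _ j IH =>
      intro hij hjK
      rcases eq_or_lt_of_le hij with h | h
      · rw [← h, hti, hβ i le_rfl hiK, ggtS_base]
      · rw [htj j h hjK]
        have hsum : ∑ l ∈ Finset.Icc i (j-1), (Nat.choose (j-1) (l-1) : ℝ) * t l * α l j
            = δ^(K-j+1) * ∑ l ∈ Finset.Icc i (j-1),
                (Nat.choose (j-1) (l-1) : ℝ) * (1-δ)^(j-l) * ggtS K i δ N l := by
          rw [Finset.mul_sum]
          refine Finset.sum_congr rfl (fun l hl => ?_)
          simp only [Finset.mem_Icc] at hl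
          have hlj : l < j := by omega
          rw [hα l j hlj, IH l hlj (by omega) (by omega)]
          ring
        rw [hsum]
        have hkey := ggtS_key K i δ N hδ0 hδ1 j hi h hjK
        have hsplit : Finset.Icc i j = insert j (Finset.Icc i (j-1)) := by
          ext a; simp only [Finset.mem_Icc, Finset.mem_insert]; omega
        rw [hsplit, Finset.sum_insert (by simp only [Finset.mem_Icc]; omega)] at hkey
        simp only [Nat.sub_self, pow_zero, Nat.choose_self, Nat.cast_one, one_mul,
          mul_one] at hkey
        rw [hβ j hij hjK, div_mul_eq_mul_div, one_mul, div_eq_iff (ne_of_gt (hb j))]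
        linear_combination -hkey
  intro j hij hjK
  have hsum : ∑ l ∈ Finset.Icc i j, (Nat.choose (j-1) (l-1) : ℝ) * t l
      = ∑ l ∈ Finset.Icc i j, (Nat.choose (j-1) (l-1) : ℝ) * (1:ℝ)^(j-l) * ggtS K i δ N l := by
    refine Finset.sum_congr rfl (fun l hl => ?_)
    simp only [Finset.mem_Icc] at hl
    rw [ht l hl.1 (le_trans hl.2 hjK), one_pow, mul_one]
  rw [hsum, ggtS_weighted K i δ N 1 j hi hij, show (1:ℝ) - 1 = 0 by ring]
  have hsingle : ∑ m ∈ Finset.Icc i j, (Nat.choose (j-1) (m-1) : ℝ) * (0:ℝ)^(j-m) * ggtC K i δ m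
      = (Nat.choose (j-1) (j-1) : ℝ) * (0:ℝ)^(j-j) * ggtC K i δ j := by
    refine Finset.sum_eq_single_of_mem j (by simp only [Finset.mem_Icc]; omega) ?_
    intro m hm hne
    simp only [Finset.mem_Icc] at hm
    rw [zero_pow (by omega : j - m ≠ 0)]
    ring
  rw [hsingle, Nat.sub_self, pow_zero, Nat.choose_self, Nat.cast_one]
  simp only [one_mul, mul_one]
  rw [ggtC, hβ j hij hjK]
  have hch : Nat.choose (j-1) (i-1) = Nat.choose (j-1) (j-i) := by
    rw [← Nat.choose_symm (by omega : i-1 ≤ j-1)]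
    congr 1
    omega
  rw [hch, mul_div_assoc]
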